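/- For every x ∈ ℝ^d it holds that (1/n) ∑_{i=1}^n ‖∇f_i(x) − ∇f_i(x*)‖² ≤ 2L (f(x) − f(x*)). (This is the conditional expectation E_t‖∇f_{i(t)}(x^{(t)}) − ∇f_{i(t)}(x*)‖² over a uniformly random index i(t) ∈ {1,…,n}.) -/

import Mathlib

open scoped RealInnerProductSpace
open InnerProductSpace

variable {E : Type*} [NormedAddCommGroup E] [InnerProductSpace ℝ E] [CompleteSpace E]

/-- derivative of `g` along a line -/
lemma line_hasDerivAt {g : E → ℝ} {G : E → E} (hg : ∀ z, HasGradientAt g (G z) z)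
    (x v : E) (t : ℝ) :
    HasDerivAt (fun s : ℝ => g (x + s • v)) ⟪G (x + t • v), v⟫ t := by
  have hline : HasDerivAt (fun s : ℝ => x + s • v) v t := by
    simpa using ((hasDerivAt_id t).smul_const v).const_add x
  have := (hg (x + t • v)).hasFDerivAt.comp_hasDerivAt t hline
  simpa [toDual_apply_apply, Function.comp_def] using this

/-- Descent lemma: quadratic upper bound from Lipschitz gradient. -/
lemma descent {g : E → ℝ} {G : E → E} {L : ℝ} (hL : 0 < L)
    (hg : ∀ z, HasGradientAt g (G z) z)
    (hlip : ∀ a b, ‖G a - G b‖ ≤ L * ‖a - b‖) (x y : E) :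
    g y ≤ g x + ⟪G x, y - x⟫ + L / 2 * ‖y - x‖ ^ 2 := by
  set v := y - x with hv
  set φ : ℝ → ℝ := fun t => g (x + t • v) - t * ⟪G x, v⟫ - L / 2 * ‖v‖ ^ 2 * t ^ 2 with hφ
  have hφ' : ∀ t : ℝ, HasDerivAt φ
      (⟪G (x + t • v), v⟫ - ⟪G x, v⟫ - L / 2 * ‖v‖ ^ 2 * (2 * t)) t := by
    intro t
    have h1 := line_hasDerivAt hg x v t
    have h2 : HasDerivAt (fun s : ℝ => s * ⟪G x, v⟫) ⟪G x, v⟫ t := by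
      simpa using (hasDerivAt_id t).mul_const ⟪G x, v⟫
    have h3 : HasDerivAt (fun s : ℝ => L / 2 * ‖v‖ ^ 2 * s ^ 2)
        (L / 2 * ‖v‖ ^ 2 * (2 * t)) t := by
      simpa using (hasDerivAt_pow 2 t).const_mul (L / 2 * ‖v‖ ^ 2)
    exact (h1.sub h2).sub h3
  have hanti : AntitoneOn φ (Set.Icc (0:ℝ) 1) := by
    apply antitoneOn_of_hasDerivWithinAt_nonpos (convex_Icc 0 1)
      (fun t _ => (hφ' t).continuousAt.continuousWithinAt)
      (fun t ht => ((hφ' t).hasDerivWithinAt))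
    intro t ht
    rw [interior_Icc] at ht
    have hkey : ⟪G (x + t • v) - G x, v⟫ ≤ L * t * ‖v‖ ^ 2 := by
      calc ⟪G (x + t • v) - G x, v⟫ ≤ ‖G (x + t • v) - G x‖ * ‖v‖ :=
            real_inner_le_norm _ _
        _ ≤ (L * ‖(x + t • v) - x‖) * ‖v‖ :=
            mul_le_mul_of_nonneg_right (hlip (x + t • v) x) (norm_nonneg v)
        _ = L * t * ‖v‖ ^ 2 := by
            have : ‖(x + t • v) - x‖ = t * ‖v‖ := by
              simp [norm_smul, abs_of_pos ht.1]
            rw [this]; ring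
    rw [inner_sub_left] at hkey
    nlinarith
  have h01 := hanti (Set.left_mem_Icc.2 zero_le_one) (Set.right_mem_Icc.2 zero_le_one)
    zero_le_one
  have e0 : φ 0 = g x := by simp [hφ]
  have e1 : φ 1 = g y - ⟪G x, v⟫ - L / 2 * ‖v‖ ^ 2 := by
    simp [hφ, hv]
  rw [e0, e1] at h01
  linarith

/-- First-order condition for convexity. -/
lemma convex_first_order {g : E → ℝ} {G : E → E}
    (hconv : ConvexOn ℝ Set.univ g) (hg : ∀ z, HasGradientAt g (G z) z) (x y : E) :
    g x + ⟪G x, y - x⟫ ≤ g y := by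
  set v := y - x with hv
  set φ : ℝ → ℝ := fun t => g (x + t • v) with hφ
  have hφconv : ConvexOn ℝ Set.univ φ := by
    have h := hconv.comp_affineMap (AffineMap.lineMap x y : ℝ →ᵃ[ℝ] E)
    have he : φ = g ∘ (AffineMap.lineMap x y : ℝ →ᵃ[ℝ] E) := by
      funext t
      simp only [hφ, Function.comp_apply, AffineMap.lineMap_apply_module, hv]
      congr 1
      module
    rw [he]
    simpa using h
  have hd : HasDerivAt φ ⟪G x, v⟫ 0 := by
    simpa using line_hasDerivAt hg x v 0
  have hs := hφconv.le_slope_of_hasDerivAt (Set.mem_univ (0:ℝ)) (Set.mem_univ (1:ℝ))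
    zero_lt_one hd
  have e0 : φ 0 = g x := by simp [hφ]
  have e1 : φ 1 = g y := by simp [hφ, hv]
  rw [slope_def_field, e0, e1] at hs
  have : ⟪G x, v⟫ ≤ g y - g x := by
    simpa [div_one] using hs
  linarith

/-- Cocoercivity inequality for convex functions with Lipschitz gradient. -/
lemma cocoercive {g : E → ℝ} {G : E → E} {L : ℝ} (hL : 0 < L)
    (hconv : ConvexOn ℝ Set.univ g)
    (hg : ∀ z, HasGradientAt g (G z) z)
    (hlip : ∀ a b, ‖G a - G b‖ ≤ L * ‖a - b‖) (x y : E) :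
    ‖G y - G x‖ ^ 2 ≤ 2 * L * (g y - g x - ⟪G x, y - x⟫) := by
  set c := G x with hc
  set h : E → ℝ := fun z => g z - ⟪c, z⟫ with hh
  set H : E → E := fun z => G z - c with hH
  have hHg : ∀ z, HasGradientAt h (H z) z := by
    intro z
    have h1 : HasFDerivAt h (toDual ℝ E (G z) - toDual ℝ E c) z := by
      refine ((hg z).hasFDerivAt).sub ?_
      exact (toDual ℝ E c).hasFDerivAt
    rw [← map_sub] at h1
    simpa using h1.hasGradientAt
  have hHlip : ∀ a b, ‖H a - H b‖ ≤ L * ‖a - b‖ := by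
    intro a b
    simpa [hH, sub_sub_sub_cancel_right] using hlip a b
  have hxmin : ∀ z, h x ≤ h z := by
    intro z
    have h1 := convex_first_order hconv hg x z
    have h2 : ⟪c, z⟫ - ⟪c, x⟫ = ⟪c, z - x⟫ := (inner_sub_right _ _ _).symm
    simp only [hh]
    rw [← hc] at h1
    linarith
  set u := H y with hu
  have hdes := descent hL hHg hHlip y (y - L⁻¹ • u)
  have e1 : (y - L⁻¹ • u) - y = -(L⁻¹ • u) := by abel
  have e2 : ⟪H y, (y - L⁻¹ • u) - y⟫ = -(L⁻¹ * ‖u‖ ^ 2) := by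
    rw [e1, inner_neg_right, inner_smul_right, ← hu, real_inner_self_eq_norm_sq]
  have e3 : ‖(y - L⁻¹ • u) - y‖ ^ 2 = L⁻¹ ^ 2 * ‖u‖ ^ 2 := by
    rw [e1, norm_neg, norm_smul, mul_pow]
    simp [abs_of_pos (inv_pos.2 hL)]
  rw [e2, e3] at hdes
  have hkey : h x ≤ h y - 1 / (2 * L) * ‖u‖ ^ 2 := by
    have := hxmin (y - L⁻¹ • u)
    have harith : L / 2 * (L⁻¹ ^ 2 * ‖u‖ ^ 2) - L⁻¹ * ‖u‖ ^ 2 = -(1 / (2 * L) * ‖u‖ ^ 2) := by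
      field_simp
      ring
    nlinarith [this, hdes]
  have hfin : ‖u‖ ^ 2 ≤ 2 * L * (h y - h x) := by
    have h2L : (0:ℝ) < 2 * L := by linarith
    have : 1 / (2 * L) * ‖u‖ ^ 2 ≤ h y - h x := by linarith
    calc ‖u‖ ^ 2 = 2 * L * (1 / (2 * L) * ‖u‖ ^ 2) := by field_simp
      _ ≤ 2 * L * (h y - h x) := by
          exact mul_le_mul_of_nonneg_left this (le_of_lt h2L)
  have e4 : h y - h x = g y - g x - ⟪c, y - x⟫ := by
    simp only [hh]
    rw [inner_sub_right]
    ring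
  rw [e4] at hfin
  simpa [hu, hH, hc] using hfin

theorem stmt_2 (n d : ℕ) (hn : 1 ≤ n) (hd : 1 ≤ d) (L : ℝ) (hL : 0 < L)
    (f : Fin n → EuclideanSpace ℝ (Fin d) → ℝ)
    (hconv : ∀ i, ConvexOn ℝ Set.univ (f i))
    (hdiff : ∀ i, Differentiable ℝ (f i))
    (hsmooth : ∀ i x y, ‖gradient (f i) x - gradient (f i) y‖ ≤ L * ‖x - y‖)
    (F : EuclideanSpace ℝ (Fin d) → ℝ)
    (hF : F = fun x => (n : ℝ)⁻¹ * ∑ i, f i x)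
    (xstar : EuclideanSpace ℝ (Fin d)) (hmin : ∀ y, F xstar ≤ F y)
    (x : EuclideanSpace ℝ (Fin d)) :
    (n : ℝ)⁻¹ * ∑ i, ‖gradient (f i) x - gradient (f i) xstar‖ ^ 2
      ≤ 2 * L * (F x - F xstar) := by
  have hg : ∀ i (z : EuclideanSpace ℝ (Fin d)), HasGradientAt (f i) (gradient (f i) z) z :=
    fun i z => (hdiff i z).hasGradientAt
  have key : ∀ i, ‖gradient (f i) x - gradient (f i) xstar‖ ^ 2
      ≤ 2 * L * (f i x - f i xstar - ⟪gradient (f i) xstar, x - xstar⟫) :=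
    fun i => cocoercive hL (hconv i) (hg i) (fun a b => hsmooth i a b) xstar x
  -- the sum of inner products vanishes
  have hn0 : ((n : ℝ))⁻¹ ≠ 0 := by
    positivity
  have hFd : HasFDerivAt F
      ((n : ℝ)⁻¹ • ∑ i, (toDual ℝ (EuclideanSpace ℝ (Fin d)) (gradient (f i) xstar))) xstar := by
    rw [hF]
    exact (HasFDerivAt.fun_sum (fun i _ => (hg i xstar).hasFDerivAt)).const_mul _
  have hloc : IsLocalMin F xstar := Filter.Eventually.of_forall hmin
  have hzero' : ((n : ℝ)⁻¹ • ∑ i, (toDual ℝ (EuclideanSpace ℝ (Fin d)) (gradient (f i) xstar)))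
      = (0 : EuclideanSpace ℝ (Fin d) →L[ℝ] ℝ) := by
    rw [← hFd.fderiv]
    exact hloc.fderiv_eq_zero
  have hzero : ∑ i, ⟪gradient (f i) xstar, x - xstar⟫ = 0 := by
    have := congrFun (congrArg (fun (T : EuclideanSpace ℝ (Fin d) →L[ℝ] ℝ) => (T : EuclideanSpace ℝ (Fin d) → ℝ)) hzero') (x - xstar)
    simp only [ContinuousLinearMap.smul_apply, ContinuousLinearMap.coe_sum',
      Finset.sum_apply, toDual_apply_apply, ContinuousLinearMap.zero_apply, smul_eq_mul] at this
    rcases mul_eq_zero.1 this with h | h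
    · exact absurd h hn0
    · exact h
  have hsum : ∑ i, ‖gradient (f i) x - gradient (f i) xstar‖ ^ 2
      ≤ 2 * L * ((∑ i, f i x) - ∑ i, f i xstar) := by
    calc ∑ i, ‖gradient (f i) x - gradient (f i) xstar‖ ^ 2
        ≤ ∑ i, 2 * L * (f i x - f i xstar - ⟪gradient (f i) xstar, x - xstar⟫) :=
          Finset.sum_le_sum (fun i _ => key i)
      _ = 2 * L * ((∑ i, f i x) - ∑ i, f i xstar)
            - 2 * L * ∑ i, ⟪gradient (f i) xstar, x - xstar⟫ := by
          rw [← Finset.mul_sum, Finset.sum_sub_distrib, Finset.sum_sub_distrib]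
          ring
      _ = 2 * L * ((∑ i, f i x) - ∑ i, f i xstar) := by rw [hzero]; ring
  have hninv : (0:ℝ) ≤ (n : ℝ)⁻¹ := by positivity
  calc (n : ℝ)⁻¹ * ∑ i, ‖gradient (f i) x - gradient (f i) xstar‖ ^ 2
      ≤ (n : ℝ)⁻¹ * (2 * L * ((∑ i, f i x) - ∑ i, f i xstar)) :=
        mul_le_mul_of_nonneg_left hsum hninv
    _ = 2 * L * (F x - F xstar) := by rw [hF]; ring
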